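/- arXiv:1602.07550 — 2 statements merged into one kernel-verified Lean document; each statement's English description precedes it below -/
import Mathlib

section
/- Let n ≥ 1 and let F : ℝⁿ → ℝⁿ be differentiable at a point x* with F(x*) = 0. Let α : ℝⁿ → ℝ be continuous at x*, and let J̃ : ℝⁿ → Matrix (Fin n) (Fin n) ℝ be continuous at x* with J̃(x*) invertible. Then the generalized Newton iteration map G(x) = x − α(x) • ((J̃ x)⁻¹ *ᵥ F x) is differentiable at x*, and its derivative (the linearization of the solver about the root) is DG(x*) = I − α(x*) · (J̃(x*))⁻¹ · DF(x*), where DF(x*) is the Jacobian matrix of F at x*. -/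
open Matrix Asymptotics

/-- If `u` is continuous at `a` (valued in continuous linear maps), `f` has derivative `f'`
at `a`, and `f a = 0`, then `x ↦ u x (f x)` has derivative `(u a).comp f'` at `a`. -/
lemma clm_apply_hasFDerivAt {E F G : Type*} [NormedAddCommGroup E] [NormedSpace ℝ E]
    [NormedAddCommGroup F] [NormedSpace ℝ F] [NormedAddCommGroup G] [NormedSpace ℝ G]
    {u : E → F →L[ℝ] G} {f : E → F} {a : E} {f' : E →L[ℝ] F}
    (hu : ContinuousAt u a) (hf : HasFDerivAt f f' a) (h0 : f a = 0) :
    HasFDerivAt (fun x => u x (f x)) ((u a).comp f') a := by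
  rw [hasFDerivAt_iff_isLittleO_nhds_zero] at hf ⊢
  have key : (fun h : E => u (a + h) (f (a + h)) - u a (f a) - ((u a).comp f') h)
      = (fun h => u (a + h) (f (a + h) - f a - f' h)) + fun h => (u (a + h) - u a) (f' h) := by
    funext h
    simp only [Pi.add_apply, ContinuousLinearMap.sub_apply, map_sub,
      ContinuousLinearMap.comp_apply, h0, map_zero]
    abel
  rw [key]
  have huten : Filter.Tendsto (fun h : E => u (a + h)) (nhds 0) (nhds (u a)) := by
    have : Filter.Tendsto (fun h : E => a + h) (nhds 0) (nhds a) := by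
      have hc : Continuous fun h : E => a + h := continuous_const.add continuous_id
      simpa using hc.tendsto (0 : E)
    exact hu.tendsto.comp this
  apply IsLittleO.add
  · -- first piece
    have hO : (fun h : E => u (a + h) (f (a + h) - f a - f' h))
        =O[nhds 0] (fun h => f (a + h) - f a - f' h) := by
      have hb : ∀ᶠ h : E in nhds 0, ‖u (a + h)‖ ≤ ‖u a‖ + 1 := by
        have : ∀ᶠ v in nhds (u a), ‖v‖ ≤ ‖u a‖ + 1 := by
          have : Metric.ball (u a) 1 ∈ nhds (u a) := Metric.ball_mem_nhds _ one_pos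
          filter_upwards [this] with v hv
          have h2 : ‖v - u a‖ < 1 := by
            rw [← dist_eq_norm]; exact Metric.mem_ball.mp hv
          linarith [norm_le_norm_add_norm_sub' v (u a)]
        exact huten.eventually this
      apply IsBigO.of_bound (‖u a‖ + 1)
      filter_upwards [hb] with h hh
      calc ‖u (a + h) (f (a + h) - f a - f' h)‖
          ≤ ‖u (a + h)‖ * ‖f (a + h) - f a - f' h‖ := (u (a + h)).le_opNorm _
        _ ≤ (‖u a‖ + 1) * ‖f (a + h) - f a - f' h‖ := by
            apply mul_le_mul_of_nonneg_right hh (norm_nonneg _)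
    exact hO.trans_isLittleO hf
  · -- second piece
    rw [isLittleO_iff]
    intro c hc
    have hε : ∀ᶠ h : E in nhds 0, ‖u (a + h) - u a‖ ≤ c / (‖f'‖ + 1) := by
      have htend : Filter.Tendsto (fun h : E => ‖u (a + h) - u a‖) (nhds 0) (nhds 0) := by
        have := (huten.sub_const (u a)).norm
        simpa using this
      have hpos : 0 < c / (‖f'‖ + 1) := by positivity
      exact htend.eventually_le_const hpos
    filter_upwards [hε] with h hh
    calc ‖(u (a + h) - u a) (f' h)‖
        ≤ ‖u (a + h) - u a‖ * ‖f' h‖ := (u (a + h) - u a).le_opNorm _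
      _ ≤ (c / (‖f'‖ + 1)) * (‖f'‖ * ‖h‖) := by
          apply mul_le_mul hh (f'.le_opNorm h) (norm_nonneg _)
          positivity
      _ ≤ c * ‖h‖ := by
          rw [div_mul_eq_mul_div, mul_comm ‖f'‖ ‖h‖, ← mul_assoc, mul_div_assoc]
          have h1 : ‖f'‖ / (‖f'‖ + 1) ≤ 1 := by
            rw [div_le_one (by positivity)]; linarith
          calc c * ‖h‖ * (‖f'‖ / (‖f'‖ + 1)) ≤ c * ‖h‖ * 1 := by
                apply mul_le_mul_of_nonneg_left h1 (by positivity)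
            _ = c * ‖h‖ := mul_one _

/-- The generalized Newton iteration map `G x = x - α x • ((J̃ x)⁻¹ *ᵥ F x)` is
differentiable at a root `x*` of `F` (with `α` and `J̃` continuous at `x*` and
`J̃ x*` invertible), and its derivative is `I - α(x*) (J̃ x*)⁻¹ DF(x*)`. -/
theorem newton_map_fderiv (n : ℕ) (hn : 1 ≤ n)
    (F : (Fin n → ℝ) → (Fin n → ℝ))
    (α : (Fin n → ℝ) → ℝ)
    (Jt : (Fin n → ℝ) → Matrix (Fin n) (Fin n) ℝ)
    (G : (Fin n → ℝ) → (Fin n → ℝ))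
    (hG : ∀ x, G x = x - α x • ((Jt x)⁻¹ *ᵥ F x))
    (xstar : Fin n → ℝ)
    (hF : DifferentiableAt ℝ F xstar) (hFz : F xstar = 0)
    (hαc : ContinuousAt α xstar)
    (hJc : ContinuousAt Jt xstar) (hJ : IsUnit (Jt xstar)) :
    DifferentiableAt ℝ G xstar ∧
      ∀ v, fderiv ℝ G xstar v = v - α xstar • ((Jt xstar)⁻¹ *ᵥ fderiv ℝ F xstar v) := by
  -- the matrix-valued coefficient `c x = α x • (Jt x)⁻¹` is continuous at `xstar`
  set c : (Fin n → ℝ) → Matrix (Fin n) (Fin n) ℝ := fun x => α x • (Jt x)⁻¹ with hc_def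
  have hdet : ContinuousAt (fun x => (Jt x).det) xstar :=
    ((Continuous.matrix_det continuous_id).continuousAt).comp hJc
  have hdet_ne : (Jt xstar).det ≠ 0 := by
    have := (Matrix.isUnit_iff_isUnit_det _).mp hJ
    exact IsUnit.ne_zero (by simpa using this)
  have hadj : ContinuousAt (fun x => (Jt x).adjugate) xstar :=
    ((Continuous.matrix_adjugate continuous_id).continuousAt).comp hJc
  have hinv : ContinuousAt (fun x => (Jt x)⁻¹) xstar := by
    have heq : (fun x => (Jt x)⁻¹) = fun x => ((Jt x).det)⁻¹ • (Jt x).adjugate := by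
      funext x
      rw [Matrix.inv_def, Ring.inverse_eq_inv']
    rw [heq]
    exact (hdet.inv₀ hdet_ne).smul hadj
  have hcc : ContinuousAt c xstar := hαc.smul hinv
  -- turn matrices into continuous linear maps
  let ψ : Matrix (Fin n) (Fin n) ℝ ≃ₗ[ℝ] ((Fin n → ℝ) →L[ℝ] (Fin n → ℝ)) :=
    Matrix.toLin'.trans LinearMap.toContinuousLinearMap
  have hψcont : Continuous ψ := ψ.toLinearMap.continuous_of_finiteDimensional
  set u : (Fin n → ℝ) → ((Fin n → ℝ) →L[ℝ] (Fin n → ℝ)) := fun x => ψ (c x) with hu_def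
  have huc : ContinuousAt u xstar := hψcont.continuousAt.comp hcc
  have hψapp : ∀ M v, ψ M v = M *ᵥ v := by
    intro M v
    simp [ψ, Matrix.toLin'_apply]
  set f' := fderiv ℝ F xstar with hf'_def
  have hf : HasFDerivAt F f' xstar := hF.hasFDerivAt
  have hmain : HasFDerivAt (fun x => u x (F x)) ((u xstar).comp f') xstar :=
    clm_apply_hasFDerivAt huc hf hFz
  have hGeq : G = fun x => x - u x (F x) := by
    funext x
    rw [hG x, hu_def]
    simp only [hψapp]
    rw [hc_def]
    rw [Matrix.smul_mulVec]
  have hGd : HasFDerivAt G (ContinuousLinearMap.id ℝ (Fin n → ℝ) - (u xstar).comp f') xstar := by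
    rw [hGeq]
    exact (hasFDerivAt_id xstar).sub hmain
  refine ⟨hGd.differentiableAt, fun v => ?_⟩
  rw [hGd.fderiv]
  simp only [ContinuousLinearMap.sub_apply, ContinuousLinearMap.id_apply,
    ContinuousLinearMap.comp_apply, hu_def, hψapp, hc_def, ← hf'_def,
    Matrix.smul_mulVec]
end

section
/- Let n, k ≥ 1 and let F : ℝⁿ → ℝⁿ be differentiable at a point x* with F(x*) = 0 and with invertible Jacobian J = DF(x*). Let α : ℝⁿ → ℝ be continuous at x* with α(x*) = α₀, and let J̃ : ℝⁿ → Matrix (Fin n) (Fin n) ℝ be continuous at x* with J̃(x*) = J + U·C·V, where U is n×k, C is an invertible k×k matrix, V is k×n, and C⁻¹ + V J⁻¹ U is invertible. Then the generalized Newton iteration map G(x) = x − α(x) • ((J̃ x)⁻¹ *ᵥ F x) is differentiable at x* with derivative DG(x*) = (1 − α₀)·I + α₀ · J⁻¹ · U · (C⁻¹ + V J⁻¹ U)⁻¹ · V. -/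
open Matrix Asymptotics Filter Topology

/-- The matrix inverse is continuous at invertible matrices. -/
lemma matrixInv_continuousAt {n : ℕ} {A₀ : Matrix (Fin n) (Fin n) ℝ} (h : IsUnit A₀) :
    ContinuousAt (fun A : Matrix (Fin n) (Fin n) ℝ => A⁻¹) A₀ := by
  have hdet : A₀.det ≠ 0 := by
    simpa [isUnit_iff_ne_zero] using (Matrix.isUnit_iff_isUnit_det A₀).mp h
  have heq : (fun A : Matrix (Fin n) (Fin n) ℝ => A⁻¹)
      = fun A => (A.det)⁻¹ • A.adjugate := by
    funext A
    rw [Matrix.inv_def, Ring.inverse_eq_inv']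
  rw [heq]
  exact ((continuous_id.matrix_det.continuousAt).inv₀ hdet).smul
    continuous_id.matrix_adjugate.continuousAt

/-- If `B` is continuous at `a`, `f` is differentiable at `a` and `f a = 0`, then
`x ↦ B x (f x)` is differentiable at `a` with derivative `(B a) ∘ f'`. -/
lemma hasFDerivAt_clm_apply_of_continuousAt
    {E F G : Type*} [NormedAddCommGroup E] [NormedSpace ℝ E]
    [NormedAddCommGroup F] [NormedSpace ℝ F]
    [NormedAddCommGroup G] [NormedSpace ℝ G]
    {B : E → F →L[ℝ] G} {f : E → F} {f' : E →L[ℝ] F} {a : E}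
    (hB : ContinuousAt B a) (hf : HasFDerivAt f f' a) (h0 : f a = 0) :
    HasFDerivAt (fun x => B x (f x)) ((B a).comp f') a := by
  rw [hasFDerivAt_iff_isLittleO]
  have hferr : (fun x => f x - f a - f' (x - a)) =o[𝓝 a] fun x => x - a := by
    rw [hasFDerivAt_iff_isLittleO] at hf; exact hf
  have h1 : (fun x => B x (f x - f a - f' (x - a))) =o[𝓝 a] fun x => x - a := by
    refine IsBigO.trans_isLittleO ?_ hferr
    have hb : ∀ᶠ x in 𝓝 a, ‖B x‖ < ‖B a‖ + 1 :=
      (hB.norm : Tendsto (fun x => ‖B x‖) (𝓝 a) (𝓝 ‖B a‖)).eventually_lt_const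
        (lt_add_one _)
    refine Asymptotics.IsBigO.of_bound (‖B a‖ + 1) ?_
    filter_upwards [hb] with x hx
    calc ‖B x (f x - f a - f' (x - a))‖
        ≤ ‖B x‖ * ‖f x - f a - f' (x - a)‖ := (B x).le_opNorm _
      _ ≤ (‖B a‖ + 1) * ‖f x - f a - f' (x - a)‖ := by gcongr
  have h2 : (fun x => (B x - B a) (f' (x - a))) =o[𝓝 a] fun x => x - a := by
    have hb0 : (fun x => ‖B x - B a‖) =o[𝓝 a] (fun _ => (1 : ℝ)) := by
      rw [Asymptotics.isLittleO_one_iff]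
      have ht : Tendsto (fun x => B x - B a) (𝓝 a) (𝓝 (B a - B a)) :=
        hB.sub continuousAt_const
      simpa using ht.norm
    have hf'O : (fun x => ‖f' (x - a)‖) =O[𝓝 a] fun x => ‖x - a‖ :=
      (f'.isBigO_sub (𝓝 a) a).norm_norm
    have hprod := hb0.mul_isBigO hf'O
    simp only [one_mul] at hprod
    have h2' : (fun x => ‖B x - B a‖ * ‖f' (x - a)‖) =o[𝓝 a] fun x => x - a :=
      Asymptotics.isLittleO_norm_right.mp hprod
    refine IsBigO.trans_isLittleO ?_ h2'
    refine Asymptotics.IsBigO.of_bound 1 (Filter.Eventually.of_forall fun x => ?_)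
    have hle : ‖(B x - B a) (f' (x - a))‖ ≤ ‖B x - B a‖ * ‖f' (x - a)‖ :=
      (B x - B a).le_opNorm _
    have hn : ‖‖B x - B a‖ * ‖f' (x - a)‖‖ = ‖B x - B a‖ * ‖f' (x - a)‖ :=
      Real.norm_of_nonneg (by positivity)
    rw [one_mul, hn]
    exact hle
  have hsum := h1.add h2
  have heq : (fun x => B x (f x) - B a (f a) - ((B a).comp f') (x - a))
      = fun x => B x (f x - f a - f' (x - a)) + (B x - B a) (f' (x - a)) := by
    funext x
    simp only [h0, map_zero, sub_zero, map_sub, ContinuousLinearMap.sub_apply,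
      ContinuousLinearMap.coe_comp', Function.comp_apply]
    abel
  rw [heq]
  exact hsum

/-- Linearization of the damped Newton solver about a root in the presence of a
low-rank Jacobian implementation error `J̃(x*) = J + U C V`:
`DG(x*) = (1 - α₀) I + α₀ J⁻¹ U (C⁻¹ + V J⁻¹ U)⁻¹ V`. -/
theorem newton_fderiv_low_rank_error (n k : ℕ) (hn : 1 ≤ n) (hk : 1 ≤ k)
    (F : (Fin n → ℝ) → (Fin n → ℝ)) (xstar : Fin n → ℝ)
    (hF : DifferentiableAt ℝ F xstar) (hFz : F xstar = 0)
    (J : Matrix (Fin n) (Fin n) ℝ)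
    (hJF : ∀ v, J *ᵥ v = fderiv ℝ F xstar v) (hJ : IsUnit J)
    (α : (Fin n → ℝ) → ℝ) (α₀ : ℝ)
    (hαc : ContinuousAt α xstar) (hα0 : α xstar = α₀)
    (U : Matrix (Fin n) (Fin k) ℝ) (C : Matrix (Fin k) (Fin k) ℝ)
    (V : Matrix (Fin k) (Fin n) ℝ) (hC : IsUnit C)
    (hW : IsUnit (C⁻¹ + V * J⁻¹ * U))
    (Jt : (Fin n → ℝ) → Matrix (Fin n) (Fin n) ℝ)
    (hJc : ContinuousAt Jt xstar) (hJt : Jt xstar = J + U * C * V)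
    (G : (Fin n → ℝ) → (Fin n → ℝ))
    (hG : ∀ x, G x = x - α x • ((Jt x)⁻¹ *ᵥ F x)) :
    DifferentiableAt ℝ G xstar ∧
      ∀ v, fderiv ℝ G xstar v =
        ((1 - α₀) • (1 : Matrix (Fin n) (Fin n) ℝ) +
          α₀ • (J⁻¹ * U * (C⁻¹ + V * J⁻¹ * U)⁻¹ * V)) *ᵥ v := by
  -- invertibility of J + U C V
  have hJt_unit : IsUnit (J + U * C * V) := by
    obtain ⟨iJ⟩ := hJ.nonempty_invertible
    obtain ⟨iC⟩ := hC.nonempty_invertible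
    have hW' : IsUnit (⅟C + V * ⅟J * U) := by
      rwa [invOf_eq_nonsing_inv, invOf_eq_nonsing_inv]
    obtain ⟨iW⟩ := hW'.nonempty_invertible
    letI := Matrix.invertibleAddMulMul J U C V
    exact isUnit_of_invertible _
  -- the CLM-valued function B
  let Φ : Matrix (Fin n) (Fin n) ℝ →ₗ[ℝ] ((Fin n → ℝ) →L[ℝ] (Fin n → ℝ)) :=
    { toFun := fun A => LinearMap.toContinuousLinearMap A.mulVecLin
      map_add' := by
        intro A B; ext v
        simp [Matrix.add_mulVec]
      map_smul' := by
        intro c A; ext v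
        simp [Matrix.smul_mulVec] }
  have hΦc : Continuous Φ := Φ.continuous_of_finiteDimensional
  set B : (Fin n → ℝ) → ((Fin n → ℝ) →L[ℝ] (Fin n → ℝ)) :=
    fun x => α x • Φ ((Jt x)⁻¹) with hBdef
  have hB : ContinuousAt B xstar := by
    refine hαc.smul (hΦc.continuousAt.comp ?_)
    have : ContinuousAt (fun A : Matrix (Fin n) (Fin n) ℝ => A⁻¹) (Jt xstar) := by
      refine matrixInv_continuousAt ?_
      rw [hJt]; exact hJt_unit
    exact this.comp hJc
  -- derivative of F
  obtain ⟨f', hf'⟩ := hF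
  have hf'eq : ∀ v, f' v = J *ᵥ v := by
    intro v
    rw [hJF v, hf'.fderiv]
  -- derivative of x ↦ B x (F x)
  have hh : HasFDerivAt (fun x => B x (F x)) ((B xstar).comp f') xstar :=
    hasFDerivAt_clm_apply_of_continuousAt hB hf' hFz
  -- derivative of G
  have hGfun : G = fun x => x - B x (F x) := by
    funext x
    rw [hG x]
    simp [hBdef, Φ, Matrix.mulVecLin_apply]
  have hGd : HasFDerivAt G
      (ContinuousLinearMap.id ℝ (Fin n → ℝ) - (B xstar).comp f') xstar := by
    rw [hGfun]
    exact (hasFDerivAt_id xstar).sub hh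
  refine ⟨hGd.differentiableAt, fun v => ?_⟩
  rw [hGd.fderiv]
  -- compute the derivative applied to v
  have hBx : B xstar v = α₀ • ((J + U * C * V)⁻¹ *ᵥ v) := by
    simp [hBdef, hα0, hJt, Φ, Matrix.mulVecLin_apply]
  have key : (J + U * C * V)⁻¹ * J =
      1 - J⁻¹ * U * (C⁻¹ + V * J⁻¹ * U)⁻¹ * V := by
    rw [Matrix.add_mul_mul_inv_eq_sub J U C V hJ hC hW]
    rw [sub_mul, Matrix.nonsing_inv_mul J ((Matrix.isUnit_iff_isUnit_det J).mp hJ)]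
    congr 1
    rw [Matrix.mul_assoc (J⁻¹ * U * (C⁻¹ + V * J⁻¹ * U)⁻¹ * V) J⁻¹ J,
      Matrix.nonsing_inv_mul J ((Matrix.isUnit_iff_isUnit_det J).mp hJ), Matrix.mul_one]
  have happ : (B xstar) (f' v) = α₀ • (((J + U * C * V)⁻¹ * J) *ᵥ v) := by
    simp [hBdef, hα0, hJt, Φ, Matrix.mulVecLin_apply, hf'eq v, Matrix.mulVec_mulVec]
  simp only [ContinuousLinearMap.sub_apply, ContinuousLinearMap.id_apply,
    ContinuousLinearMap.coe_comp', Function.comp_apply, happ, key]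
  rw [Matrix.sub_mulVec, Matrix.one_mulVec, Matrix.add_mulVec,
    Matrix.smul_mulVec, Matrix.smul_mulVec, smul_sub,
    Matrix.one_mulVec, sub_smul, one_smul]
  module
end
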